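/- For every ideal I of A, the set I⋈^f J := {(i, f(i)+j) : i ∈ I, j ∈ J} is an ideal of the ring A⋈^f J, and the composition of the canonical embedding ι : A → A⋈^f J, ι(a) = (a, f(a)), with the canonical projection A⋈^f J → (A⋈^f J)/(I⋈^f J) is a surjective ring homomorphism whose kernel equals I (hence (A⋈^f J)/(I⋈^f J) is isomorphic to A/I). -/

import Mathlib

set_option maxHeartbeats 1000000
set_option synthInstance.maxHeartbeats 400000


section Amalgamation

variable {A B : Type*} [CommRing A] [CommRing B]

/-- The amalgamation `A ⋈^f J` of `A` with `B` along the ideal `J` of `B` with respect to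
the ring homomorphism `f : A → B`, realized as the subring
`{(a, f a + j) | a ∈ A, j ∈ J}` of `A × B`. -/
def amalg (f : A →+* B) (J : Ideal B) : Subring (A × B) where
  carrier := {x : A × B | x.2 - f x.1 ∈ J}
  zero_mem' := by simp
  one_mem' := by simp
  add_mem' := by
    intro x y hx hy
    simp only [Set.mem_setOf_eq, Prod.fst_add, Prod.snd_add, map_add] at *
    have h : x.2 + y.2 - (f x.1 + f y.1) = x.2 - f x.1 + (y.2 - f y.1) := by ring
    rw [h]; exact J.add_mem hx hy
  neg_mem' := by
    intro x hx
    simp only [Set.mem_setOf_eq, Prod.fst_neg, Prod.snd_neg, map_neg] at *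
    have h : -x.2 - -f x.1 = -(x.2 - f x.1) := by ring
    rw [h]; exact J.neg_mem hx
  mul_mem' := by
    intro x y hx hy
    simp only [Set.mem_setOf_eq, Prod.fst_mul, Prod.snd_mul, map_mul] at *
    have h : x.2 * y.2 - f x.1 * f y.1 = x.2 * (y.2 - f y.1) + (x.2 - f x.1) * f y.1 := by ring
    rw [h]
    exact J.add_mem (J.mul_mem_left _ hy) (J.mul_mem_right _ hx)

lemma mem_amalg_iff (f : A →+* B) (J : Ideal B) (x : A × B) :
    x ∈ amalg f J ↔ x.2 - f x.1 ∈ J := Iff.rfl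

/-- The canonical embedding `ι : A → A ⋈^f J`, `a ↦ (a, f a)`. -/
def iota (f : A →+* B) (J : Ideal B) : A →+* amalg f J :=
  ((RingHom.id A).prod f).codRestrict (amalg f J) (fun a => by
    simp [mem_amalg_iff])

end Amalgamation

/-- For every ideal `I` of `A`, the set `I ⋈^f J = {(i, f i + j) | i ∈ I, j ∈ J}` is an
ideal of `A ⋈^f J`, and the composition of `ι : A → A ⋈^f J` with the projection onto
the quotient by this ideal is a surjective ring homomorphism with kernel `I`
(hence `(A ⋈^f J)/(I ⋈^f J) ≅ A/I`). -/
theorem stmt1 {A B : Type*} [CommRing A] [CommRing B] (f : A →+* B) (J : Ideal B)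
    (I : Ideal A) :
    ∃ K : Ideal (amalg f J),
      ((K : Set (amalg f J)) =
        {x : amalg f J | ∃ i ∈ I, ∃ j ∈ J, (x : A × B) = (i, f i + j)}) ∧
      Function.Surjective ((Ideal.Quotient.mk K).comp (iota f J)) ∧
      RingHom.ker ((Ideal.Quotient.mk K).comp (iota f J)) = I ∧
      Nonempty ((amalg f J ⧸ K) ≃+* A ⧸ I) := by
  classical
  set π : amalg f J →+* A := (RingHom.fst A B).comp (amalg f J).subtype with hπ
  refine ⟨I.comap π, ?_, ?_, ?_, ?_⟩
  · ext x
    simp only [SetLike.mem_coe, Ideal.mem_comap, Set.mem_setOf_eq, hπ, RingHom.comp_apply]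
    constructor
    · intro hx
      refine ⟨(x : A × B).1, hx, (x : A × B).2 - f (x : A × B).1, x.2, ?_⟩
      ext <;> simp
    · rintro ⟨i, hi, j, hj, hx⟩
      have : (x : A × B).1 = i := by rw [hx]
      simpa [this] using hi
  · intro y
    obtain ⟨x, rfl⟩ := Ideal.Quotient.mk_surjective y
    refine ⟨(x : A × B).1, ?_⟩
    rw [RingHom.comp_apply, Ideal.Quotient.mk_eq_mk_iff_sub_mem]
    simp only [Ideal.mem_comap, hπ, RingHom.comp_apply]
    simp [iota]
    change (x : A × B).1 - (x : A × B).1 ∈ I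
    simp
  · ext a
    simp only [RingHom.mem_ker, RingHom.comp_apply, Ideal.Quotient.eq_zero_iff_mem,
      Ideal.mem_comap, hπ]
    simp [iota]
    exact Iff.rfl
  · have hsurj : Function.Surjective ((Ideal.Quotient.mk (I.comap π)).comp (iota f J)) := by
      intro y
      obtain ⟨x, rfl⟩ := Ideal.Quotient.mk_surjective y
      refine ⟨(x : A × B).1, ?_⟩
      rw [RingHom.comp_apply, Ideal.Quotient.mk_eq_mk_iff_sub_mem]
      simp only [Ideal.mem_comap, hπ, RingHom.comp_apply]
      simp [iota]
      change (x : A × B).1 - (x : A × B).1 ∈ I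
      simp
    have hker : RingHom.ker ((Ideal.Quotient.mk (I.comap π)).comp (iota f J)) = I := by
      ext a
      simp only [RingHom.mem_ker, RingHom.comp_apply, Ideal.Quotient.eq_zero_iff_mem,
        Ideal.mem_comap, hπ]
      simp [iota]
      exact Iff.rfl
    exact ⟨((Ideal.quotEquivOfEq hker.symm).trans
      (RingHom.quotientKerEquivOfSurjective hsurj)).symm⟩
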